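/- Let d, s be positive integers and t a real number with t ≥ ds/2 and t ≥ 1. Then for all integers i with 0 ≤ i ≤ s-1 and j with 0 ≤ j ≤ d-1, we have (1 + 1/t)^(i/s) · (1 + j/(dt))^(1/s) ≥ 1 + i/(st) + (j-1)/(dst). -/

import Mathlib

lemma bern_lower (x p : ℝ) (hx : 0 ≤ x) (hp : 0 ≤ p) (hp1 : p ≤ 1) :
    (1 + x) ≤ (1 + x) ^ p * (1 + (1 - p) * x) := by
  have hx1 : (0:ℝ) < 1 + x := by linarith
  have h1 : (1 + x) ^ ((1:ℝ) - p) ≤ 1 + (1 - p) * x :=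
    rpow_one_add_le_one_add_mul_self (by linarith) (by linarith) (by linarith)
  calc (1 + x) = (1 + x) ^ p * (1 + x) ^ ((1:ℝ) - p) := by
        rw [← Real.rpow_add hx1]; simp
    _ ≤ (1 + x) ^ p * (1 + (1 - p) * x) :=
        mul_le_mul_of_nonneg_left h1 (Real.rpow_nonneg hx1.le p)

lemma Nle (a b σ δ : ℝ) (ha : 0 ≤ a) (ha1 : a + σ ≤ 1) (hb : 0 ≤ b) (hb1 : b + δ ≤ 1)
    (hσ : 0 < σ) (hδ : 0 < δ) (hδ1 : δ ≤ 1) :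
    a * (1 - a + σ*δ - b*σ) - σ*(1-σ)*b*(δ-b) ≤ 1/2 := by
  -- N = a(1-a) + σ(δ-b)(a-(1-σ)b), and 1/2 - a(1-a) = (a-1/2)^2+1/4
  have key : σ*(δ-b)*(a-(1-σ)*b) ≤ 1/4 := by
    rcases le_total b δ with h | h
    · rcases le_total (a - (1-σ)*b) 0 with h2 | h2
      · nlinarith [mul_nonneg hσ.le (sub_nonneg.2 h)]
      · -- ≤ σδa ≤ (1-a)a ≤ 1/4
        have e1 : σ*(δ-b)*(a-(1-σ)*b) ≤ σ*δ*a := by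
          nlinarith [mul_nonneg (mul_nonneg hσ.le hδ.le) (mul_nonneg (sub_nonneg.2 (by linarith : σ ≤ 1)) hb),
            mul_nonneg (mul_nonneg hσ.le hb) h2]
        have e2 : σ*δ*a ≤ (1-a)*a := by
          nlinarith [mul_nonneg hσ.le (sub_nonneg.2 hδ1), mul_pos hσ hδ]
        nlinarith [sq_nonneg (1 - 2*a)]
    · rcases le_total (a - (1-σ)*b) 0 with h2 | h2
      · -- σ(b-δ)((1-σ)b - a) ≤ σ(1-σ)b² ≤ 1/4
        have e1 : σ*(δ-b)*(a-(1-σ)*b) ≤ σ*(1-σ)*b^2 := by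
          nlinarith [mul_nonneg (mul_nonneg hσ.le (sub_nonneg.2 (by linarith : σ ≤ 1))) (mul_nonneg hb hδ.le),
            mul_nonneg (mul_nonneg hσ.le ha) (sub_nonneg.2 h)]
        have e2 : σ*(1-σ)*b^2 ≤ 1/4 := by
          nlinarith [sq_nonneg (1 - 2*σ), mul_nonneg (mul_nonneg hσ.le (sub_nonneg.2 (by linarith : σ ≤ 1))) (mul_nonneg (sub_nonneg.2 (by linarith : b ≤ 1)) (by linarith : (0:ℝ) ≤ 1 + b))]
        linarith
      · nlinarith [mul_nonneg (mul_nonneg hσ.le (sub_nonneg.2 h)) h2]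
  nlinarith [sq_nonneg (1 - 2*a)]

lemma Nple (a b σ δ : ℝ) (ha : 0 ≤ a) (ha1 : a + σ ≤ 1) (hb : 0 ≤ b) (hb1 : b + δ ≤ 1)
    (hσ : 0 < σ) (hδ : 0 < δ) (hδ1 : δ ≤ 1) :
    (1-σ)*b*(a * (1 - a + σ*δ - b*σ) + σ*(b-δ)) ≤ 1/2 := by
  nlinarith [sq_nonneg (1 - 2*a - σ), sq_nonneg (3*σ - 1), mul_nonneg ha hb,
    mul_nonneg (mul_nonneg ha hb) hσ.le, mul_nonneg (mul_nonneg hσ.le hδ.le) hb,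
    mul_nonneg hb (sub_nonneg.2 (by linarith : σ ≤ 1)),
    mul_nonneg (mul_nonneg hb hb) hσ.le, sq_nonneg (b - 1), sq_nonneg (a - (1-σ)/2),
    mul_nonneg (mul_nonneg hσ.le hb) (sub_nonneg.2 (by linarith : b ≤ 1)),
    mul_nonneg (mul_nonneg ha hσ.le) hδ.le,
    mul_nonneg (sub_nonneg.2 (by linarith : b ≤ 1)) (sub_nonneg.2 (by linarith : σ ≤ 1))]

lemma key (u a b σ δ : ℝ) (hu : 0 < u) (hu2 : u ≤ 2*σ*δ) (ha : 0 ≤ a) (ha1 : a + σ ≤ 1)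
    (hb : 0 ≤ b) (hb1 : b + δ ≤ 1) (hσ : 0 < σ) (hδ : 0 < δ) (hδ1 : δ ≤ 1) :
    (1 + a*u + σ*b*u - σ*δ*u) * ((1 + (1-a)*u) * (1 + (1-σ)*b*u)) ≤ (1+u)*(1+b*u) := by
  set N : ℝ := a * (1 - a + σ*δ - b*σ) - σ*(1-σ)*b*(δ-b) with hNdef
  set Np : ℝ := a * (1 - a + σ*δ - b*σ) + σ*(b-δ) with hNpdef
  have hN : N ≤ 1/2 := Nle a b σ δ ha ha1 hb hb1 hσ hδ hδ1
  have hNp : (1-σ)*b*Np ≤ 1/2 := Nple a b σ δ ha ha1 hb hb1 hσ hδ hδ1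
  have hfact : (1+u)*(1+b*u) - (1 + a*u + σ*b*u - σ*δ*u) * ((1 + (1-a)*u) * (1 + (1-σ)*b*u))
      = u*σ*δ*(1+u) - u^2*N - u^3*((1-σ)*b*Np) := by
    rw [hNdef, hNpdef]; ring
  have h1 : u^2*N ≤ u*σ*δ := by
    nlinarith [sq_nonneg u, mul_pos hu (mul_pos hσ hδ)]
  have h2 : u^3*((1-σ)*b*Np) ≤ u*σ*δ*u := by
    rcases le_or_gt ((1-σ)*b*Np) 0 with hX | hX
    · have : u^3*((1-σ)*b*Np) ≤ 0 := mul_nonpos_of_nonneg_of_nonpos (by positivity) hX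
      nlinarith [mul_pos (mul_pos (mul_pos hu hσ) hδ) hu]
    · have e1 : u*((1-σ)*b*Np) ≤ (2*σ*δ)*(1/2) := by
        calc u*((1-σ)*b*Np) ≤ (2*σ*δ)*((1-σ)*b*Np) := by
              apply mul_le_mul_of_nonneg_right hu2 hX.le
          _ ≤ (2*σ*δ)*(1/2) := by
              apply mul_le_mul_of_nonneg_left hNp (by positivity)
      calc u^3*((1-σ)*b*Np) = u^2*(u*((1-σ)*b*Np)) := by ring
        _ ≤ u^2*((2*σ*δ)*(1/2)) := mul_le_mul_of_nonneg_left e1 (by positivity)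
        _ = u*σ*δ*u := by ring
  linarith

theorem stmt_6 (d s : ℕ) (hd : 0 < d) (hs : 0 < s) (t : ℝ) (ht : t ≥ d * s / 2) (ht1 : 1 ≤ t)
    (i j : ℕ) (hi : i ≤ s - 1) (hj : j ≤ d - 1) :
    (1 + 1 / t) ^ ((i : ℝ) / s) * (1 + j / (d * t)) ^ ((1 : ℝ) / s) ≥
      1 + i / (s * t) + ((j : ℝ) - 1) / (d * s * t) := by
  have ht0 : (0:ℝ) < t := by linarith
  have hdR : (0:ℝ) < d := by exact_mod_cast hd
  have hsR : (0:ℝ) < s := by exact_mod_cast hs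
  have hiR : (i:ℝ) + 1 ≤ s := by exact_mod_cast (by omega : i + 1 ≤ s)
  have hjR : (j:ℝ) + 1 ≤ d := by exact_mod_cast (by omega : j + 1 ≤ d)
  obtain ⟨u, hudef⟩ : ∃ u : ℝ, u = 1/t := ⟨_, rfl⟩
  obtain ⟨a, hadef⟩ : ∃ a : ℝ, a = (i:ℝ)/s := ⟨_, rfl⟩
  obtain ⟨b, hbdef⟩ : ∃ b : ℝ, b = (j:ℝ)/d := ⟨_, rfl⟩
  obtain ⟨σ, hσdef⟩ : ∃ σ : ℝ, σ = 1/(s:ℝ) := ⟨_, rfl⟩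
  obtain ⟨δ, hδdef⟩ : ∃ δ : ℝ, δ = 1/(d:ℝ) := ⟨_, rfl⟩
  have hu : 0 < u := by rw [hudef]; positivity
  have hσ : 0 < σ := by rw [hσdef]; positivity
  have hδ : 0 < δ := by rw [hδdef]; positivity
  have hu2 : u ≤ 2 * σ * δ := by
    rw [hudef, hσdef, hδdef,
      show (2:ℝ)*(1/(s:ℝ))*(1/(d:ℝ)) = 2/((s:ℝ)*d) by field_simp,
      div_le_div_iff₀ ht0 (mul_pos hsR hdR)]
    rw [ge_iff_le, div_le_iff₀ (by norm_num : (0:ℝ) < 2)] at ht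
    nlinarith
  have ha : 0 ≤ a := by rw [hadef]; positivity
  have ha1 : a + σ ≤ 1 := by
    rw [hadef, hσdef, ← add_div, div_le_one hsR]; linarith
  have hb : 0 ≤ b := by rw [hbdef]; positivity
  have hb1 : b + δ ≤ 1 := by
    rw [hbdef, hδdef, ← add_div, div_le_one hdR]; linarith
  have hδ1 : δ ≤ 1 := by
    rw [hδdef, div_le_one hdR]; exact_mod_cast hd
  have hk := key u a b σ δ hu hu2 ha ha1 hb hb1 hσ hδ hδ1
  have hb1' := bern_lower u a hu.le ha (by linarith)
  have hb2' := bern_lower (b*u) σ (mul_nonneg hb hu.le) hσ.le (by linarith)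
  have e1 : (1:ℝ) + 1 / t = 1 + u := by rw [hudef]
  have e2 : ((j:ℝ)) / (d * t) = b * u := by rw [hbdef, hudef]; field_simp
  have e3 : ((i:ℝ)) / (s * t) = a * u := by rw [hadef, hudef]; field_simp
  have e4 : ((j:ℝ) - 1) / (d * s * t) = σ*b*u - σ*δ*u := by
    rw [hbdef, hudef, hσdef, hδdef, div_eq_iff (by positivity : ((d:ℝ)*s*t) ≠ 0)]
    field_simp
  have e5 : ((i:ℝ)/s) = a := hadef.symm
  have e6 : ((1:ℝ)/s) = σ := hσdef.symm
  rw [ge_iff_le, e1, e2, e3, e4, e5, e6]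
  have h1u : (0:ℝ) < 1 + u := by linarith
  have h1bu : (0:ℝ) < 1 + b*u := by
    have h := mul_nonneg hb hu.le
    linarith
  have hL1p : 0 < (1+u) ^ a := Real.rpow_pos_of_pos h1u a
  have hL2p : 0 < (1+b*u) ^ σ := Real.rpow_pos_of_pos h1bu σ
  have hD1p : (0:ℝ) < 1 + (1-a)*u := by
    have h := mul_nonneg (by linarith : (0:ℝ) ≤ 1-a) hu.le
    linarith
  have hD2p : (0:ℝ) < 1 + (1-σ)*b*u := by
    have h := mul_nonneg (mul_nonneg (by linarith : (0:ℝ) ≤ 1-σ) hb) hu.le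
    linarith
  have hprod : (1+u)*(1+b*u) ≤ ((1+u)^a*(1+b*u)^σ)*((1 + (1-a)*u)*(1 + (1-σ)*b*u)) := by
    calc (1+u)*(1+b*u) ≤ ((1+u)^a*(1 + (1-a)*u))*((1+b*u)^σ*(1 + (1-σ)*(b*u))) :=
          mul_le_mul hb1' hb2' h1bu.le (by positivity)
      _ = ((1+u)^a*(1+b*u)^σ)*((1 + (1-a)*u)*(1 + (1-σ)*b*u)) := by ring
  have hfin : (1 + a*u + (σ*b*u - σ*δ*u))*((1 + (1-a)*u)*(1 + (1-σ)*b*u))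
      ≤ ((1+u)^a*(1+b*u)^σ)*((1 + (1-a)*u)*(1 + (1-σ)*b*u)) := by
    calc (1 + a*u + (σ*b*u - σ*δ*u))*((1 + (1-a)*u)*(1 + (1-σ)*b*u))
        = (1 + a*u + σ*b*u - σ*δ*u)*((1 + (1-a)*u)*(1 + (1-σ)*b*u)) := by ring
      _ ≤ (1+u)*(1+b*u) := hk
      _ ≤ _ := hprod
  exact le_of_mul_le_mul_right hfin (by positivity)
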